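/- arXiv:1411.2707 — 3 statements merged into one kernel-verified Lean document; each statement's English description precedes it below -/
import Mathlib

section
/- Let β₀ ∈ (0,1) and c₁ > 0. There exists c₂ > 0 (depending only on β₀ and c₁) such that for every t > 0, every integer i ≥ max(6, 4 t^{1/β₀}), and every measurable f : (0,∞) → [0,∞) with f(u) ≥ c₁ t u^{-1-β₀} for all u > t^{1/β₀}, one has ∫₀^∞ f(u) e^{-u} u^i / i! du ≥ c₂ t / i^{1+β₀}. -/
open MeasureTheory

-- Stirling upper bound: n! ≤ e * √n * (n/e)^n for n ≥ 1
lemma factorial_upper (n : ℕ) (hn : 1 ≤ n) :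
    (Nat.factorial n : ℝ) ≤ Real.exp 1 * Real.sqrt n * ((n : ℝ) / Real.exp 1) ^ n := by
  have h := Stirling.stirlingSeq'_antitone (Nat.zero_le (n - 1))
  simp only [Function.comp_apply, Nat.succ_eq_add_one, Nat.sub_add_cancel hn, zero_add] at h
  rw [Stirling.stirlingSeq_one] at h
  have hn0 : (0:ℝ) < n := by exact_mod_cast hn
  have hden : 0 < Real.sqrt (2 * n) * ((n : ℝ) / Real.exp 1) ^ n := by positivity
  rw [Stirling.stirlingSeq, div_le_div_iff₀ hden (by positivity)] at h
  have hs2 : Real.sqrt (2 * (n:ℝ)) = Real.sqrt 2 * Real.sqrt n := Real.sqrt_mul (by norm_num) _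
  have h2 : (0:ℝ) < Real.sqrt 2 := by positivity
  calc (Nat.factorial n : ℝ) = (Nat.factorial n : ℝ) * Real.sqrt 2 / Real.sqrt 2 := by field_simp
    _ ≤ Real.exp 1 * (Real.sqrt (2*n) * ((n:ℝ)/Real.exp 1)^n) / Real.sqrt 2 := by gcongr
    _ = Real.exp 1 * Real.sqrt n * ((n : ℝ) / Real.exp 1) ^ n := by
        rw [hs2]; field_simp


set_option maxHeartbeats 1000000 in
/-- Estimate (5.12): lower bound `A_{β₀}(t,i) ≥ c₂ t / i^{1+β₀}` for
`i ≥ max(6, 4 t^{1/β₀})`, for a density bounded below by `c₁ t u^{-1-β₀}` on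
`u > t^{1/β₀}`. -/
theorem A_lower_estimate
    (β₀ : ℝ) (hβ₀ : 0 < β₀) (hβ₀1 : β₀ < 1) (c₁ : ℝ) (hc₁ : 0 < c₁) :
    ∃ c₂ : ℝ, 0 < c₂ ∧ ∀ (t : ℝ), 0 < t → ∀ (i : ℕ),
      (6 : ℝ) ≤ i → 4 * t ^ (1 / β₀) ≤ i →
      ∀ f : ℝ → ℝ, Measurable f → (∀ u : ℝ, 0 < u → 0 ≤ f u) →
        (∀ u : ℝ, t ^ (1 / β₀) < u → c₁ * t * u ^ (-(1 + β₀)) ≤ f u) →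
        ENNReal.ofReal (c₂ * t / (i : ℝ) ^ (1 + β₀)) ≤
          (∫⁻ u in Set.Ioi (0 : ℝ),
            ENNReal.ofReal (f u * (Real.exp (-u) * u ^ i / (Nat.factorial i : ℝ)))) := by
  refine ⟨c₁ * Real.exp (-2) / 4, by positivity, ?_⟩
  intro t ht i hi6 hi4 f hfm hfnn hflb
  set ri : ℝ := (i : ℝ) with hri_def
  have hri6 : (6:ℝ) ≤ ri := hi6
  have hri0 : (0:ℝ) < ri := by linarith
  set s : ℝ := Real.sqrt ri with hs_def
  have hs0 : 0 < s := Real.sqrt_pos.mpr hri0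
  have hs_sq : s ^ 2 = ri := Real.sq_sqrt hri0.le
  have hs_le : s ≤ ri := by nlinarith [sq_nonneg (s - 1)]
  have hi1 : 1 ≤ i := by
    by_contra h
    push_neg at h
    interval_cases i <;> simp_all <;> norm_num at hri6
  have hfacpos : (0:ℝ) < (Nat.factorial i : ℝ) := by
    exact_mod_cast Nat.factorial_pos i
  -- Stirling consequence: exp ri * i! ≤ exp 1 * s * ri ^ i
  have hM' : Real.exp ri * (Nat.factorial i : ℝ) ≤ Real.exp 1 * s * ri ^ i := by
    have h := factorial_upper i hi1
    have hpow : ((i:ℝ) / Real.exp 1) ^ i = ri ^ i / Real.exp ri := by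
      rw [div_pow, ← Real.exp_nat_mul, mul_one]
    rw [hpow] at h
    have hE : (0:ℝ) < Real.exp ri := Real.exp_pos _
    calc Real.exp ri * (Nat.factorial i : ℝ)
        ≤ Real.exp ri * (Real.exp 1 * s * (ri ^ i / Real.exp ri)) := by gcongr
      _ = Real.exp 1 * s * ri ^ i := by field_simp
  -- key1 : exp(-2) ≤ exp(-1) * (exp(-ri) * ri^i / i!) * s
  have hQ : 1 / (Real.exp 1 * s) ≤ Real.exp (-ri) * ri ^ i / (Nat.factorial i : ℝ) := by
    rw [div_le_div_iff₀ (by positivity) hfacpos]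
    have h1 : (1:ℝ) * (Nat.factorial i : ℝ)
        = Real.exp (-ri) * (Real.exp ri * (Nat.factorial i : ℝ)) := by
      rw [Real.exp_neg]; field_simp
    rw [h1]
    calc Real.exp (-ri) * (Real.exp ri * (Nat.factorial i : ℝ))
        ≤ Real.exp (-ri) * (Real.exp 1 * s * ri ^ i) := by gcongr
      _ = Real.exp (-ri) * ri ^ i * (Real.exp 1 * s) := by ring
  have key1 : Real.exp (-2) ≤ Real.exp (-1) * (Real.exp (-ri) * ri ^ i / (Nat.factorial i : ℝ)) * s := by
    have e1 : Real.exp (-1) * (1 / (Real.exp 1 * s)) * s = Real.exp (-2) := by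
      rw [show Real.exp (-2) = Real.exp (-1) * Real.exp (-1) from by
        rw [← Real.exp_add]; norm_num, Real.exp_neg 1]
      field_simp
    rw [← e1]
    gcongr
  -- key2 : 4⁻¹ * ri^(-(1+β₀)) ≤ (2*ri)^(-(1+β₀))
  have key2 : (4:ℝ)⁻¹ * ri ^ (-(1+β₀)) ≤ (2*ri) ^ (-(1+β₀)) := by
    rw [Real.mul_rpow (by norm_num) hri0.le]
    have h24 : (2:ℝ) ^ (1+β₀) ≤ 4 := by
      calc (2:ℝ) ^ (1+β₀) ≤ (2:ℝ) ^ (2:ℝ) :=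
            Real.rpow_le_rpow_of_exponent_le one_le_two (by linarith)
        _ = 4 := by
            rw [show (2:ℝ) = ((2:ℕ):ℝ) from by norm_num, Real.rpow_natCast]
            norm_num
    have h42 : (4:ℝ)⁻¹ ≤ (2:ℝ) ^ (-(1+β₀)) := by
      rw [Real.rpow_neg (by norm_num)]
      exact inv_anti₀ (by positivity) h24
    exact mul_le_mul_of_nonneg_right h42 (Real.rpow_pos_of_pos hri0 _).le
  -- define the constant L
  set L : ℝ := c₁ * t * (2*ri) ^ (-(1+β₀)) *
      (Real.exp (-1) * Real.exp (-ri) * ri ^ i / (Nat.factorial i : ℝ)) with hL_def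
  have hLpos : 0 < L := by
    have := Real.rpow_pos_of_pos (show (0:ℝ) < 2*ri by linarith) (-(1+β₀))
    positivity
  -- pointwise bound on Ioc ri (ri + s)
  have hpoint : ∀ u ∈ Set.Ioc ri (ri + s),
      L ≤ f u * (Real.exp (-u) * u ^ i / (Nat.factorial i : ℝ)) := by
    intro u hu
    obtain ⟨hu1, hu2⟩ := hu
    have hu0 : 0 < u := lt_trans hri0 hu1
    have htp : 0 < t ^ (1/β₀) := Real.rpow_pos_of_pos ht _
    have hut : t ^ (1/β₀) < u := by linarith
    have hu2ri : u ≤ 2 * ri := by linarith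
    have C1 : (2*ri) ^ (-(1+β₀)) ≤ u ^ (-(1+β₀)) :=
      Real.rpow_le_rpow_of_nonpos hu0 hu2ri (by linarith)
    -- C2 : exp(-1)*exp(-ri)*ri^i ≤ exp(-u)*u^i
    have hsq : (u - ri) ^ 2 ≤ ri := by nlinarith
    have hlog : 1 - ri / u ≤ Real.log (u / ri) := by
      have h := Real.one_sub_inv_le_log_of_pos (div_pos hu0 hri0)
      rwa [inv_div] at h
    have hkey : u - ri - 1 ≤ ri * Real.log (u / ri) := by
      have h3 : u - ri - 1 ≤ ri * (1 - ri / u) := by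
        rw [show ri * (1 - ri/u) = ri * (u - ri) / u from by field_simp,
          le_div_iff₀ hu0]
        nlinarith
      calc u - ri - 1 ≤ ri * (1 - ri/u) := h3
        _ ≤ ri * Real.log (u / ri) := by gcongr
    have hpow : Real.exp (u - ri - 1) ≤ (u / ri) ^ i := by
      have h4 : Real.exp (ri * Real.log (u / ri)) = (u / ri) ^ i := by
        rw [hri_def, Real.exp_nat_mul, Real.exp_log (div_pos hu0 hri0)]
      rw [← h4]
      exact Real.exp_le_exp.mpr hkey
    have hupow : ri ^ i * Real.exp (u - ri - 1) ≤ u ^ i := by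
      calc ri ^ i * Real.exp (u - ri - 1) ≤ ri ^ i * (u / ri) ^ i := by gcongr
        _ = u ^ i := by rw [← mul_pow, mul_div_cancel₀ _ (ne_of_gt hri0)]
    have C2 : Real.exp (-1) * Real.exp (-ri) * ri ^ i ≤ Real.exp (-u) * u ^ i := by
      have eexp : Real.exp (-1) * Real.exp (-ri) = Real.exp (-u) * Real.exp (u - ri - 1) := by
        rw [← Real.exp_add, ← Real.exp_add]; congr 1; ring
      calc Real.exp (-1) * Real.exp (-ri) * ri ^ i
          = Real.exp (-u) * (ri ^ i * Real.exp (u - ri - 1)) := by rw [eexp]; ring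
        _ ≤ Real.exp (-u) * u ^ i := by gcongr
    have step1 : L ≤ c₁ * t * u ^ (-(1+β₀)) *
        (Real.exp (-u) * u ^ i / (Nat.factorial i : ℝ)) := by
      rw [hL_def]
      have h5 : Real.exp (-1) * Real.exp (-ri) * ri ^ i / (Nat.factorial i : ℝ)
          ≤ Real.exp (-u) * u ^ i / (Nat.factorial i : ℝ) := by gcongr
      have h6 : 0 ≤ Real.exp (-1) * Real.exp (-ri) * ri ^ i / (Nat.factorial i : ℝ) := by
        positivity
      have h7 : 0 ≤ c₁ * t * (2*ri) ^ (-(1+β₀)) := by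
        have := Real.rpow_pos_of_pos (show (0:ℝ) < 2*ri by linarith) (-(1+β₀))
        positivity
      exact mul_le_mul (by gcongr) h5 h6 (by positivity)
    calc L ≤ c₁ * t * u ^ (-(1+β₀)) * (Real.exp (-u) * u ^ i / (Nat.factorial i : ℝ)) := step1
      _ ≤ f u * (Real.exp (-u) * u ^ i / (Nat.factorial i : ℝ)) := by
          apply mul_le_mul_of_nonneg_right (hflb u hut)
          positivity
  -- measurability
  have hmeas : Measurable (fun u : ℝ =>
      ENNReal.ofReal (f u * (Real.exp (-u) * u ^ i / (Nat.factorial i : ℝ)))) := by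
    apply Measurable.ennreal_ofReal
    fun_prop
  have hsub : Set.Ioc ri (ri + s) ⊆ Set.Ioi (0:ℝ) := fun u hu => lt_trans hri0 hu.1
  -- final real inequality
  have hreal : c₁ * Real.exp (-2) / 4 * t / ri ^ (1+β₀) ≤ L * s := by
    have hrineg : ri ^ (-(1+β₀)) = (ri ^ (1+β₀))⁻¹ := Real.rpow_neg hri0.le _
    calc c₁ * Real.exp (-2) / 4 * t / ri ^ (1+β₀)
        = c₁ * t * ((4:ℝ)⁻¹ * ri ^ (-(1+β₀))) * Real.exp (-2) := by
          rw [hrineg]; ring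
      _ ≤ c₁ * t * ((2*ri) ^ (-(1+β₀))) *
          (Real.exp (-1) * (Real.exp (-ri) * ri ^ i / (Nat.factorial i : ℝ)) * s) := by
          exact mul_le_mul (by gcongr) key1 (Real.exp_pos _).le (by positivity)
      _ = L * s := by rw [hL_def]; ring
  calc ENNReal.ofReal (c₁ * Real.exp (-2) / 4 * t / ri ^ (1+β₀))
      ≤ ENNReal.ofReal (L * s) := ENNReal.ofReal_le_ofReal hreal
    _ = ENNReal.ofReal L * ENNReal.ofReal s := ENNReal.ofReal_mul hLpos.le
    _ = ENNReal.ofReal L * volume (Set.Ioc ri (ri + s)) := by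
        rw [Real.volume_Ioc, add_sub_cancel_left]
    _ = ∫⁻ _ in Set.Ioc ri (ri + s), ENNReal.ofReal L := (setLIntegral_const _ _).symm
    _ ≤ ∫⁻ u in Set.Ioc ri (ri + s),
          ENNReal.ofReal (f u * (Real.exp (-u) * u ^ i / (Nat.factorial i : ℝ))) := by
        apply setLIntegral_mono hmeas
        intro u hu
        exact ENNReal.ofReal_le_ofReal (hpoint u hu)
    _ ≤ ∫⁻ u in Set.Ioi (0:ℝ),
          ENNReal.ofReal (f u * (Real.exp (-u) * u ^ i / (Nat.factorial i : ℝ))) :=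
        lintegral_mono_set hsub
end

section
/- Let K be a Markov operator symmetric with respect to μ on a countable weighted graph (Γ,μ), with nonnegative kernels k_n(x,y) of K^n relative to μ. For a nonempty finite set A ⊆ Γ, let λ(A) = sup{ ‖Kf‖₂²/‖f‖₂² : f ∈ ℓ²(Γ,μ), f ≠ 0, supp(f) ⊆ A }. Then for every nonempty finite A ⊆ Γ and every n ∈ ℕ, sup_{x,y∈Γ} k_{2n}(x,y) ≥ λ(A)^n / μ(A). -/
open scoped BigOperators ENNReal
open Classical

noncomputable section

/-- The kernel (with respect to the measure `μ`) of the `n`-th power of the Markov operator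
whose kernel with respect to `μ` is `k`. -/
def iterKernel {Γ : Type*} (μ : Γ → ℝ) (k : Γ → Γ → ℝ) : ℕ → Γ → Γ → ℝ
  | 0 => fun x y => if x = y then 1 / μ x else 0
  | n + 1 => fun x y => ∑' z : Γ, iterKernel μ k n x z * k z y * μ z

namespace TFLB

variable {Γ : Type*}

/-- ENNReal-valued mirror of `iterKernel`. -/
def eKer (μ : Γ → ℝ) (k : Γ → Γ → ℝ) : ℕ → Γ → Γ → ℝ≥0∞
  | 0 => fun x y => if x = y then (ENNReal.ofReal (μ x))⁻¹ else 0
  | n + 1 => fun x y => ∑' z : Γ, eKer μ k n x z * ENNReal.ofReal (k z y) * ENNReal.ofReal (μ z)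

variable {μ : Γ → ℝ} {k : Γ → Γ → ℝ}

lemma ofReal_markov (hμ : ∀ x, 0 < μ x) (hknn : ∀ x y, 0 ≤ k x y)
    (hkm : ∀ x, ∑' y : Γ, k x y * μ y = 1) (x : Γ) :
    ∑' y : Γ, ENNReal.ofReal (k x y) * ENNReal.ofReal (μ y) = 1 := by
  have hs : Summable (fun y => k x y * μ y) := by
    by_contra h
    have h1 := hkm x
    rw [tsum_eq_zero_of_not_summable h] at h1
    norm_num at h1
  calc ∑' y : Γ, ENNReal.ofReal (k x y) * ENNReal.ofReal (μ y)
      = ∑' y : Γ, ENNReal.ofReal (k x y * μ y) :=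
        tsum_congr fun y => (ENNReal.ofReal_mul (hknn x y)).symm
    _ = ENNReal.ofReal (∑' y : Γ, k x y * μ y) :=
        (ENNReal.ofReal_tsum_of_nonneg (fun y => mul_nonneg (hknn x y) (hμ y).le) hs).symm
    _ = 1 := by rw [hkm x]; simp

lemma eKer_rowsum (hμ : ∀ x, 0 < μ x) (hknn : ∀ x y, 0 ≤ k x y)
    (hkm : ∀ x, ∑' y : Γ, k x y * μ y = 1) :
    ∀ (n : ℕ) (x : Γ), ∑' y : Γ, eKer μ k n x y * ENNReal.ofReal (μ y) = 1 := by
  intro n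
  induction n with
  | zero =>
    intro x
    rw [tsum_eq_single x (fun y hy => by
      simp only [eKer, if_neg (fun h => hy (Eq.symm h)), zero_mul])]
    simp only [eKer]; rw [if_true]
    exact ENNReal.inv_mul_cancel ((ENNReal.ofReal_pos.2 (hμ x)).ne') ENNReal.ofReal_ne_top
  | succ n ih =>
    intro x
    calc ∑' y : Γ, eKer μ k (n+1) x y * ENNReal.ofReal (μ y)
        = ∑' y : Γ, ∑' z : Γ, eKer μ k n x z * ENNReal.ofReal (k z y) * ENNReal.ofReal (μ z)
            * ENNReal.ofReal (μ y) := by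
          refine tsum_congr fun y => ?_
          simp only [eKer]
          rw [← ENNReal.tsum_mul_right]
      _ = ∑' z : Γ, ∑' y : Γ, eKer μ k n x z * ENNReal.ofReal (μ z)
            * (ENNReal.ofReal (k z y) * ENNReal.ofReal (μ y)) := by
          rw [ENNReal.tsum_comm]
          exact tsum_congr fun z => tsum_congr fun y => by ring
      _ = ∑' z : Γ, eKer μ k n x z * ENNReal.ofReal (μ z) := by
          refine tsum_congr fun z => ?_
          rw [ENNReal.tsum_mul_left, ofReal_markov hμ hknn hkm z, mul_one]
      _ = 1 := ih x

lemma eKer_ne_top (hμ : ∀ x, 0 < μ x) (hknn : ∀ x y, 0 ≤ k x y)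
    (hkm : ∀ x, ∑' y : Γ, k x y * μ y = 1) (n : ℕ) (x y : Γ) :
    eKer μ k n x y ≠ ⊤ := by
  intro ht
  have h1 : eKer μ k n x y * ENNReal.ofReal (μ y) ≤ 1 := by
    rw [← eKer_rowsum hμ hknn hkm n x]
    exact ENNReal.le_tsum y
  rw [ht, ENNReal.top_mul ((ENNReal.ofReal_pos.2 (hμ y)).ne')] at h1
  exact (by simp at h1)

lemma iterKernel_eq_toReal (hμ : ∀ x, 0 < μ x) (hknn : ∀ x y, 0 ≤ k x y)
    (hkm : ∀ x, ∑' y : Γ, k x y * μ y = 1) :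
    ∀ (n : ℕ) (x y : Γ), iterKernel μ k n x y = (eKer μ k n x y).toReal := by
  intro n
  induction n with
  | zero =>
    intro x y
    simp only [iterKernel, eKer]
    by_cases h : x = y
    · rw [if_pos h, if_pos h, ENNReal.toReal_inv, ENNReal.toReal_ofReal (hμ x).le, one_div]
    · rw [if_neg h, if_neg h, ENNReal.toReal_zero]
  | succ n ih =>
    intro x y
    have hfin : ∀ z : Γ, eKer μ k n x z * ENNReal.ofReal (k z y) * ENNReal.ofReal (μ z) ≠ ⊤ :=
      fun z => ENNReal.mul_ne_top (ENNReal.mul_ne_top (eKer_ne_top hμ hknn hkm n x z)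
        ENNReal.ofReal_ne_top) ENNReal.ofReal_ne_top
    calc iterKernel μ k (n+1) x y
        = ∑' z : Γ, iterKernel μ k n x z * k z y * μ z := rfl
      _ = ∑' z : Γ, (eKer μ k n x z * ENNReal.ofReal (k z y) * ENNReal.ofReal (μ z)).toReal := by
          refine tsum_congr fun z => ?_
          rw [ih x z, ENNReal.toReal_mul, ENNReal.toReal_mul,
            ENNReal.toReal_ofReal (hknn z y), ENNReal.toReal_ofReal (hμ z).le]
      _ = (∑' z : Γ, eKer μ k n x z * ENNReal.ofReal (k z y) * ENNReal.ofReal (μ z)).toReal :=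
          (ENNReal.tsum_toReal_eq hfin).symm
      _ = (eKer μ k (n+1) x y).toReal := rfl

lemma iterKernel_nonneg (hμ : ∀ x, 0 < μ x) (hknn : ∀ x y, 0 ≤ k x y)
    (hkm : ∀ x, ∑' y : Γ, k x y * μ y = 1) (n : ℕ) (x y : Γ) :
    0 ≤ iterKernel μ k n x y := by
  rw [iterKernel_eq_toReal hμ hknn hkm]; exact ENNReal.toReal_nonneg

lemma ofReal_iterKernel (hμ : ∀ x, 0 < μ x) (hknn : ∀ x y, 0 ≤ k x y)
    (hkm : ∀ x, ∑' y : Γ, k x y * μ y = 1) (n : ℕ) (x y : Γ) :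
    ENNReal.ofReal (iterKernel μ k n x y) = eKer μ k n x y := by
  rw [iterKernel_eq_toReal hμ hknn hkm, ENNReal.ofReal_toReal (eKer_ne_top hμ hknn hkm n x y)]

lemma eKer_comp_left (hμ : ∀ x, 0 < μ x) :
    ∀ (n : ℕ) (x y : Γ), eKer μ k (n+1) x y
      = ∑' z : Γ, ENNReal.ofReal (k x z) * eKer μ k n z y * ENNReal.ofReal (μ z) := by
  intro n
  induction n with
  | zero =>
    intro x y
    have hμx0 : ENNReal.ofReal (μ x) ≠ 0 := (ENNReal.ofReal_pos.2 (hμ x)).ne'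
    have hμy0 : ENNReal.ofReal (μ y) ≠ 0 := (ENNReal.ofReal_pos.2 (hμ y)).ne'
    have hL : eKer μ k 1 x y = ENNReal.ofReal (k x y) := by
      show (∑' z : Γ, eKer μ k 0 x z * ENNReal.ofReal (k z y) * ENNReal.ofReal (μ z))
        = ENNReal.ofReal (k x y)
      rw [tsum_eq_single x (fun z hz => by
        simp only [eKer, if_neg (fun h => hz (Eq.symm h)), zero_mul])]
      simp only [eKer]; rw [if_true]
      rw [mul_right_comm, ENNReal.inv_mul_cancel hμx0 ENNReal.ofReal_ne_top, one_mul]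
    rw [hL]
    rw [tsum_eq_single y (fun z hz => by
      simp only [eKer, if_neg hz, mul_zero, zero_mul])]
    simp only [eKer]; rw [if_true]
    rw [mul_assoc, ENNReal.inv_mul_cancel hμy0 ENNReal.ofReal_ne_top, mul_one]
  | succ n ih =>
    intro x y
    calc eKer μ k (n+2) x y
        = ∑' z : Γ, eKer μ k (n+1) x z * ENNReal.ofReal (k z y) * ENNReal.ofReal (μ z) := rfl
      _ = ∑' z : Γ, ∑' w : Γ, ENNReal.ofReal (k x w) * eKer μ k n w z * ENNReal.ofReal (μ w)
            * ENNReal.ofReal (k z y) * ENNReal.ofReal (μ z) := by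
          refine tsum_congr fun z => ?_
          rw [ih x z, ← ENNReal.tsum_mul_right, ← ENNReal.tsum_mul_right]
      _ = ∑' w : Γ, ∑' z : Γ, (ENNReal.ofReal (k x w) * ENNReal.ofReal (μ w))
            * (eKer μ k n w z * ENNReal.ofReal (k z y) * ENNReal.ofReal (μ z)) := by
          rw [ENNReal.tsum_comm]
          exact tsum_congr fun w => tsum_congr fun z => by ring
      _ = ∑' w : Γ, ENNReal.ofReal (k x w) * eKer μ k (n+1) w y * ENNReal.ofReal (μ w) := by
          refine tsum_congr fun w => ?_
          rw [ENNReal.tsum_mul_left]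
          show ENNReal.ofReal (k x w) * ENNReal.ofReal (μ w) * eKer μ k (n+1) w y = _
          ring
lemma eKer_symm (hμ : ∀ x, 0 < μ x) (hks : ∀ x y, k x y = k y x) :
    ∀ (n : ℕ) (x y : Γ), eKer μ k n x y = eKer μ k n y x := by
  intro n
  induction n with
  | zero =>
    intro x y
    by_cases h : x = y
    · subst h; rfl
    · simp only [eKer, if_neg h, if_neg (fun h2 => h (Eq.symm h2))]
  | succ n ih =>
    intro x y
    calc eKer μ k (n+1) x y
        = ∑' z : Γ, eKer μ k n x z * ENNReal.ofReal (k z y) * ENNReal.ofReal (μ z) := rfl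
      _ = ∑' z : Γ, ENNReal.ofReal (k y z) * eKer μ k n z x * ENNReal.ofReal (μ z) := by
          refine tsum_congr fun z => ?_
          rw [ih x z, hks z y]
          ring
      _ = eKer μ k (n+1) y x := (eKer_comp_left hμ n y x).symm

lemma eKer_add (hμ : ∀ x, 0 < μ x) :
    ∀ (q p : ℕ) (x y : Γ), eKer μ k (p + q) x y
      = ∑' z : Γ, eKer μ k p x z * eKer μ k q z y * ENNReal.ofReal (μ z) := by
  intro q
  induction q with
  | zero =>
    intro p x y
    rw [tsum_eq_single y (fun z hz => by
      simp only [eKer, if_neg hz, mul_zero, zero_mul])]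
    show eKer μ k p x y = eKer μ k p x y * (if y = y then (ENNReal.ofReal (μ y))⁻¹ else 0)
        * ENNReal.ofReal (μ y)
    rw [if_pos rfl, mul_assoc,
      ENNReal.inv_mul_cancel ((ENNReal.ofReal_pos.2 (hμ y)).ne') ENNReal.ofReal_ne_top, mul_one]
  | succ q ih =>
    intro p x y
    calc eKer μ k (p + (q+1)) x y
        = ∑' z : Γ, eKer μ k (p + q) x z * ENNReal.ofReal (k z y) * ENNReal.ofReal (μ z) := rfl
      _ = ∑' z : Γ, ∑' w : Γ, eKer μ k p x w * eKer μ k q w z * ENNReal.ofReal (μ w)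
            * ENNReal.ofReal (k z y) * ENNReal.ofReal (μ z) := by
          refine tsum_congr fun z => ?_
          rw [ih p x z, ← ENNReal.tsum_mul_right, ← ENNReal.tsum_mul_right]
      _ = ∑' w : Γ, ∑' z : Γ, (eKer μ k p x w * ENNReal.ofReal (μ w))
            * (eKer μ k q w z * ENNReal.ofReal (k z y) * ENNReal.ofReal (μ z)) := by
          rw [ENNReal.tsum_comm]
          exact tsum_congr fun w => tsum_congr fun z => by ring
      _ = ∑' w : Γ, eKer μ k p x w * eKer μ k (q+1) w y * ENNReal.ofReal (μ w) := by
          refine tsum_congr fun w => ?_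
          rw [ENNReal.tsum_mul_left]
          show eKer μ k p x w * ENNReal.ofReal (μ w) * eKer μ k (q+1) w y = _
          ring

lemma inner_kernel (hμ : ∀ x, 0 < μ x) (hknn : ∀ x y, 0 ≤ k x y)
    (hkm : ∀ x, ∑' y : Γ, k x y * μ y = 1) (hks : ∀ x y, k x y = k y x)
    (p q : ℕ) (u v : Γ) :
    Summable (fun x : Γ => iterKernel μ k p x u * iterKernel μ k q x v * μ x) ∧
      ∑' x : Γ, iterKernel μ k p x u * iterKernel μ k q x v * μ x
        = iterKernel μ k (p + q) u v := by
  have hE : ∑' x : Γ, eKer μ k p x u * eKer μ k q x v * ENNReal.ofReal (μ x)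
      = eKer μ k (p + q) u v := by
    rw [eKer_add hμ q p u v]
    exact tsum_congr fun x => by rw [eKer_symm hμ hks p x u]
  have hfin : ∀ x : Γ, eKer μ k p x u * eKer μ k q x v * ENNReal.ofReal (μ x) ≠ ⊤ :=
    fun x => ENNReal.mul_ne_top (ENNReal.mul_ne_top (eKer_ne_top hμ hknn hkm p x u)
      (eKer_ne_top hμ hknn hkm q x v)) ENNReal.ofReal_ne_top
  have hpt : ∀ x : Γ, iterKernel μ k p x u * iterKernel μ k q x v * μ x
      = (eKer μ k p x u * eKer μ k q x v * ENNReal.ofReal (μ x)).toReal := by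
    intro x
    rw [ENNReal.toReal_mul, ENNReal.toReal_mul, ENNReal.toReal_ofReal (hμ x).le,
      iterKernel_eq_toReal hμ hknn hkm, iterKernel_eq_toReal hμ hknn hkm]
  constructor
  · refine Summable.congr (ENNReal.summable_toReal ?_) fun x => (hpt x).symm
    rw [hE]
    exact eKer_ne_top hμ hknn hkm _ u v
  · calc ∑' x : Γ, iterKernel μ k p x u * iterKernel μ k q x v * μ x
        = ∑' x : Γ, (eKer μ k p x u * eKer μ k q x v * ENNReal.ofReal (μ x)).toReal :=
          tsum_congr hpt
      _ = (∑' x : Γ, eKer μ k p x u * eKer μ k q x v * ENNReal.ofReal (μ x)).toReal :=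
          (ENNReal.tsum_toReal_eq hfin).symm
      _ = iterKernel μ k (p + q) u v := by
          rw [hE, iterKernel_eq_toReal hμ hknn hkm]

lemma iterKernel_one (hμ : ∀ x, 0 < μ x) (x y : Γ) :
    iterKernel μ k 1 x y = k x y := by
  show (∑' z : Γ, iterKernel μ k 0 x z * k z y * μ z) = k x y
  rw [tsum_eq_single x (fun z hz => by
    simp only [iterKernel, if_neg (fun h => hz (Eq.symm h)), zero_mul])]
  simp only [iterKernel, if_pos rfl]
  field_simp
  rw [if_pos trivial, one_div, mul_inv_cancel₀ (hμ x).ne', one_mul]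
lemma tsum_cs {ι : Type*} (w φ ψ : ι → ℝ) (hw : ∀ i, 0 ≤ w i)
    (h1 : Summable fun i => φ i * φ i * w i) (h2 : Summable fun i => ψ i * ψ i * w i) :
    (∑' i, φ i * ψ i * w i) ^ 2 ≤ (∑' i, φ i * φ i * w i) * (∑' i, ψ i * ψ i * w i) := by
  set A := ∑' i, φ i * φ i * w i with hA
  set B := ∑' i, ψ i * ψ i * w i with hB
  have hA0 : 0 ≤ A := tsum_nonneg fun i => mul_nonneg (mul_self_nonneg _) (hw i)
  have hB0 : 0 ≤ B := tsum_nonneg fun i => mul_nonneg (mul_self_nonneg _) (hw i)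
  have habs : Summable fun i => |φ i * ψ i * w i| := by
    refine Summable.of_nonneg_of_le (fun i => abs_nonneg _)
      (fun i => ?_) (((h1.add h2)).div_const 2)
    have h3 : |φ i * ψ i * w i| = |φ i| * |ψ i| * w i := by
      rw [abs_mul, abs_mul, abs_of_nonneg (hw i)]
    rw [h3]
    have key : |φ i| * |ψ i| * 2 ≤ φ i * φ i + ψ i * ψ i := by
      have h0 : 0 ≤ (|φ i| - |ψ i|) ^ 2 := sq_nonneg _
      rw [sub_sq, sq_abs, sq_abs] at h0
      nlinarith [h0]
    nlinarith [mul_le_mul_of_nonneg_right key (hw i)]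
  have hsum : Summable fun i => φ i * ψ i * w i := habs.of_abs
  have h4 : ∑' i, |φ i * ψ i * w i| ≤ Real.sqrt (A * B) := by
    refine Summable.tsum_le_of_sum_le habs fun s => ?_
    have hcs := Finset.sum_mul_sq_le_sq_mul_sq s (fun i => |φ i| * Real.sqrt (w i))
      (fun i => |ψ i| * Real.sqrt (w i))
    have e1 : ∀ i, (|φ i| * Real.sqrt (w i)) * (|ψ i| * Real.sqrt (w i))
        = |φ i * ψ i * w i| := by
      intro i
      rw [abs_mul, abs_mul, abs_of_nonneg (hw i)]
      have h := Real.mul_self_sqrt (hw i)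
      linear_combination (|φ i| * |ψ i|) * h
    have e2 : ∀ i, (|φ i| * Real.sqrt (w i)) ^ 2 = φ i * φ i * w i := by
      intro i
      rw [mul_pow, sq_abs, Real.sq_sqrt (hw i), sq]
    have e3 : ∀ i, (|ψ i| * Real.sqrt (w i)) ^ 2 = ψ i * ψ i * w i := by
      intro i
      rw [mul_pow, sq_abs, Real.sq_sqrt (hw i), sq]
    rw [Finset.sum_congr rfl (fun i _ => e1 i)] at hcs
    rw [Finset.sum_congr rfl (fun i _ => e2 i), Finset.sum_congr rfl (fun i _ => e3 i)] at hcs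
    have h5 : ∑ i ∈ s, φ i * φ i * w i ≤ A :=
      Summable.sum_le_tsum s (fun i _ => mul_nonneg (mul_self_nonneg _) (hw i)) h1
    have h6 : ∑ i ∈ s, ψ i * ψ i * w i ≤ B :=
      Summable.sum_le_tsum s (fun i _ => mul_nonneg (mul_self_nonneg _) (hw i)) h2
    have h7 : (∑ i ∈ s, |φ i * ψ i * w i|) ^ 2 ≤ A * B := by
      refine hcs.trans ?_
      have hs1 : 0 ≤ ∑ i ∈ s, φ i * φ i * w i :=
        Finset.sum_nonneg fun i _ => mul_nonneg (mul_self_nonneg _) (hw i)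
      have hs2 : 0 ≤ ∑ i ∈ s, ψ i * ψ i * w i :=
        Finset.sum_nonneg fun i _ => mul_nonneg (mul_self_nonneg _) (hw i)
      exact mul_le_mul h5 h6 hs2 hA0
    rw [Real.le_sqrt (Finset.sum_nonneg fun i _ => abs_nonneg _) (mul_nonneg hA0 hB0)]
    exact h7
  have h8 : |∑' i, φ i * ψ i * w i| ≤ ∑' i, |φ i * ψ i * w i| := by
    have := norm_tsum_le_tsum_norm (f := fun i => φ i * ψ i * w i)
      (by simp only [Real.norm_eq_abs]; exact habs)
    simp only [Real.norm_eq_abs] at this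
    exact this
  calc (∑' i, φ i * ψ i * w i) ^ 2 = |∑' i, φ i * ψ i * w i| ^ 2 := (sq_abs _).symm
    _ ≤ (Real.sqrt (A * B)) ^ 2 := by
        apply pow_le_pow_left₀ (abs_nonneg _)
        exact h8.trans h4
    _ = A * B := Real.sq_sqrt (mul_nonneg hA0 hB0)
lemma key (hμ : ∀ x, 0 < μ x) (hks : ∀ x y, k x y = k y x) (hknn : ∀ x y, 0 ≤ k x y)
    (hkm : ∀ x, ∑' y : Γ, k x y * μ y = 1)
    (A : Finset Γ) (n : ℕ) (hn : n ≠ 0) (m : ℝ) (hm0 : 0 ≤ m)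
    (hbound : ∀ x y, iterKernel μ k (2 * n) x y ≤ m)
    (f : Γ → ℝ) (hf0 : f ≠ 0) (hfA : ∀ x ∉ A, f x = 0) :
    ((∑' x : Γ, (∑' y : Γ, k x y * f y * μ y) ^ 2 * μ x) /
        (∑' x : Γ, f x ^ 2 * μ x)) ^ n ≤ m * (∑ x ∈ A, μ x) := by
  classical
  obtain ⟨g, hg⟩ : ∃ g : ℕ → Γ → ℝ, ∀ j x, g j x = ∑ u ∈ A, iterKernel μ k j x u * f u * μ u :=
    ⟨_, fun j x => rfl⟩
  obtain ⟨B, hB⟩ : ∃ B : ℕ → ℝ, ∀ j, B j = ∑ u ∈ A, ∑ v ∈ A,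
      iterKernel μ k j u v * f u * f v * (μ u * μ v) := ⟨_, fun j => rfl⟩
  have hC1 : ∀ p q : ℕ, Summable (fun x => g p x * g q x * μ x) ∧
      ∑' x : Γ, g p x * g q x * μ x = B (p + q) := by
    intro p q
    have hterm : ∀ x : Γ, g p x * g q x * μ x
        = ∑ u ∈ A, ∑ v ∈ A,
            iterKernel μ k p x u * iterKernel μ k q x v * μ x * (f u * f v * (μ u * μ v)) := by
      intro x
      rw [hg, hg, Finset.sum_mul_sum, Finset.sum_mul]
      refine Finset.sum_congr rfl fun u _ => ?_
      rw [Finset.sum_mul]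
      exact Finset.sum_congr rfl fun v _ => by ring
    have hsummand : ∀ u ∈ A, ∀ v ∈ A, Summable (fun x : Γ =>
        iterKernel μ k p x u * iterKernel μ k q x v * μ x * (f u * f v * (μ u * μ v))) :=
      fun u _ v _ => ((inner_kernel hμ hknn hkm hks p q u v).1).mul_right _
    constructor
    · refine Summable.congr ?_ fun x => (hterm x).symm
      exact summable_sum fun u hu => summable_sum fun v hv => hsummand u hu v hv
    · calc ∑' x : Γ, g p x * g q x * μ x
          = ∑' x : Γ, ∑ u ∈ A, ∑ v ∈ A, iterKernel μ k p x u * iterKernel μ k q x v * μ x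
              * (f u * f v * (μ u * μ v)) := tsum_congr hterm
        _ = ∑ u ∈ A, ∑ v ∈ A, ∑' x : Γ, iterKernel μ k p x u * iterKernel μ k q x v * μ x
              * (f u * f v * (μ u * μ v)) := by
            rw [Summable.tsum_finsetSum (fun u hu => summable_sum fun v hv => hsummand u hu v hv)]
            exact Finset.sum_congr rfl fun u hu => Summable.tsum_finsetSum (fun v hv => hsummand u hu v hv)
        _ = B (p + q) := by
            rw [hB]
            refine Finset.sum_congr rfl fun u hu => Finset.sum_congr rfl fun v hv => ?_
            rw [tsum_mul_right, (inner_kernel hμ hknn hkm hks p q u v).2]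
            ring
  obtain ⟨a, ha⟩ : ∃ a : ℕ → ℝ, ∀ j, a j = ∑' x : Γ, g j x * g j x * μ x :=
    ⟨_, fun j => rfl⟩
  have haB : ∀ j, a j = B (2 * j) := by
    intro j
    rw [ha, (hC1 j j).2, two_mul]
  have ha_nonneg : ∀ j, 0 ≤ a j := by
    intro j
    rw [ha]
    exact tsum_nonneg fun x => mul_nonneg (mul_self_nonneg _) (hμ x).le
  have hCS : ∀ j, a (j+1) ^ 2 ≤ a j * a (j+2) := by
    intro j
    have h1 : a (j+1) = ∑' x : Γ, g j x * g (j+2) x * μ x := by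
      rw [haB, (hC1 j (j+2)).2]
      exact congrArg B (by ring)
    rw [h1, ha j, ha (j+2)]
    exact tsum_cs μ (g j) (g (j+2)) (fun x => (hμ x).le) ((hC1 j j).1) ((hC1 (j+2) (j+2)).1)
  have ha0sum : a 0 = ∑ u ∈ A, f u ^ 2 * μ u := by
    rw [haB, mul_zero, hB]
    refine Finset.sum_congr rfl fun u hu => ?_
    rw [Finset.sum_eq_single_of_mem u hu]
    · have hμu := (hμ u).ne'
      simp only [iterKernel, if_pos rfl]
      field_simp
      rw [if_pos trivial, one_div, mul_inv_cancel₀ hμu, one_mul]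
    · intro v hv hvu
      simp only [iterKernel, if_neg (fun h => hvu (Eq.symm h)), zero_mul]
  have ha0_pos : 0 < a 0 := by
    rw [ha0sum]
    obtain ⟨x₁, hx₁⟩ : ∃ x, f x ≠ 0 := Function.ne_iff.1 hf0
    have hx₁A : x₁ ∈ A := by
      by_contra h
      exact hx₁ (hfA x₁ h)
    refine Finset.sum_pos' (fun i _ => mul_nonneg (sq_nonneg _) (hμ i).le) ⟨x₁, hx₁A, ?_⟩
    exact mul_pos (lt_of_le_of_ne (sq_nonneg _) (Ne.symm (pow_ne_zero _ hx₁))) (hμ x₁)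
  have hg1 : ∀ x : Γ, (∑' y : Γ, k x y * f y * μ y) = g 1 x := by
    intro x
    rw [tsum_eq_sum (s := A) (fun y hy => by simp [hfA y hy]), hg]
    refine Finset.sum_congr rfl fun u _ => ?_
    rw [iterKernel_one hμ]
  have hnum : (∑' x : Γ, (∑' y : Γ, k x y * f y * μ y) ^ 2 * μ x) = a 1 := by
    rw [ha]
    exact tsum_congr fun x => by rw [hg1 x]; ring
  have hden : (∑' x : Γ, f x ^ 2 * μ x) = a 0 := by
    rw [ha0sum]
    exact tsum_eq_sum fun x hx => by simp [hfA x hx]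
  have hμA_nonneg : (0:ℝ) ≤ ∑ x ∈ A, μ x := Finset.sum_nonneg fun i _ => (hμ i).le
  have hfinal : a n ≤ m * (∑ x ∈ A, μ x) * a 0 := by
    have hstep1 : B (2*n) ≤ ∑ u ∈ A, ∑ v ∈ A, m * ((|f u| * μ u) * (|f v| * μ v)) := by
      rw [hB]
      refine Finset.sum_le_sum fun u hu => Finset.sum_le_sum fun v hv => ?_
      have h1 : f u * f v ≤ |f u| * |f v| := (le_abs_self _).trans (le_of_eq (abs_mul _ _))
      have hknn2 := iterKernel_nonneg hμ hknn hkm (2*n) u v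
      have hb := hbound u v
      have hμuv : (0:ℝ) ≤ μ u * μ v := mul_nonneg (hμ u).le (hμ v).le
      calc iterKernel μ k (2*n) u v * f u * f v * (μ u * μ v)
          = iterKernel μ k (2*n) u v * (μ u * μ v) * (f u * f v) := by ring
        _ ≤ iterKernel μ k (2*n) u v * (μ u * μ v) * (|f u| * |f v|) :=
            mul_le_mul_of_nonneg_left h1 (mul_nonneg hknn2 hμuv)
        _ ≤ m * (μ u * μ v) * (|f u| * |f v|) :=
            mul_le_mul_of_nonneg_right (mul_le_mul_of_nonneg_right hb hμuv)
              (mul_nonneg (abs_nonneg _) (abs_nonneg _))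
        _ = m * ((|f u| * μ u) * (|f v| * μ v)) := by ring
    have hstep2 : ∑ u ∈ A, ∑ v ∈ A, m * ((|f u| * μ u) * (|f v| * μ v))
        = m * (∑ u ∈ A, |f u| * μ u) ^ 2 := by
      rw [sq, Finset.sum_mul_sum, Finset.mul_sum]
      refine Finset.sum_congr rfl fun u _ => ?_
      rw [Finset.mul_sum]
    have hstep3 : (∑ u ∈ A, |f u| * μ u) ^ 2
        ≤ (∑ u ∈ A, f u ^ 2 * μ u) * (∑ u ∈ A, μ u) := by
      have hcs := Finset.sum_mul_sq_le_sq_mul_sq A (fun u => |f u| * Real.sqrt (μ u))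
        (fun u => Real.sqrt (μ u))
      have e1 : ∀ u, |f u| * Real.sqrt (μ u) * Real.sqrt (μ u) = |f u| * μ u := by
        intro u; rw [mul_assoc, Real.mul_self_sqrt (hμ u).le]
      have e2 : ∀ u, (|f u| * Real.sqrt (μ u)) ^ 2 = f u ^ 2 * μ u := by
        intro u; rw [mul_pow, sq_abs, Real.sq_sqrt (hμ u).le]
      have e3 : ∀ u : Γ, (Real.sqrt (μ u)) ^ 2 = μ u := fun u => Real.sq_sqrt (hμ u).le
      rw [Finset.sum_congr rfl fun u _ => e1 u, Finset.sum_congr rfl fun u _ => e2 u,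
        Finset.sum_congr rfl fun u _ => e3 u] at hcs
      exact hcs
    calc a n = B (2*n) := haB n
      _ ≤ ∑ u ∈ A, ∑ v ∈ A, m * ((|f u| * μ u) * (|f v| * μ v)) := hstep1
      _ = m * (∑ u ∈ A, |f u| * μ u) ^ 2 := hstep2
      _ ≤ m * ((∑ u ∈ A, f u ^ 2 * μ u) * (∑ u ∈ A, μ u)) :=
          mul_le_mul_of_nonneg_left hstep3 hm0
      _ = m * (∑ x ∈ A, μ x) * a 0 := by rw [ha0sum]; ring
  rw [hnum, hden]
  by_cases ha1 : a 1 = 0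
  · rw [ha1, zero_div, zero_pow hn]
    exact mul_nonneg hm0 hμA_nonneg
  · have ha1pos : 0 < a 1 := lt_of_le_of_ne (ha_nonneg 1) (Ne.symm ha1)
    have hpair : ∀ j, 0 < a j ∧ 0 < a (j+1) := by
      intro j
      induction j with
      | zero => exact ⟨ha0_pos, ha1pos⟩
      | succ j ih =>
        refine ⟨ih.2, ?_⟩
        have hcs := hCS j
        nlinarith [ih.1, ih.2, ha_nonneg (j+2), mul_pos ih.2 ih.2]
    have hR : ∀ j, a 1 * a j ≤ a (j+1) * a 0 := by
      intro j
      induction j with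
      | zero => exact le_of_eq (by norm_num [mul_comm])
      | succ j ih =>
        have hcs := hCS j
        have h2 := (hpair (j+1)).1
        have h3 := (hpair (j+2)).1
        have h4 : (a 1 * a (j+1)) * a (j+1) ≤ (a (j+2) * a 0) * a (j+1) := by
          calc (a 1 * a (j+1)) * a (j+1) = a 1 * a (j+1) ^ 2 := by ring
            _ ≤ a 1 * (a j * a (j+2)) := mul_le_mul_of_nonneg_left hcs ha1pos.le
            _ = (a 1 * a j) * a (j+2) := by ring
            _ ≤ (a (j+1) * a 0) * a (j+2) := mul_le_mul_of_nonneg_right ih h3.le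
            _ = (a (j+2) * a 0) * a (j+1) := by ring
        exact le_of_mul_le_mul_right h4 h2
    have hQ : ∀ j, a 1 ^ j * a 0 ≤ a j * a 0 ^ j := by
      intro j
      induction j with
      | zero => simp
      | succ j ih =>
        calc a 1 ^ (j+1) * a 0 = a 1 * (a 1 ^ j * a 0) := by ring
          _ ≤ a 1 * (a j * a 0 ^ j) := mul_le_mul_of_nonneg_left ih ha1pos.le
          _ = (a 1 * a j) * a 0 ^ j := by ring
          _ ≤ (a (j+1) * a 0) * a 0 ^ j :=
              mul_le_mul_of_nonneg_right (hR j) (pow_nonneg ha0_pos.le j)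
          _ = a (j+1) * a 0 ^ (j+1) := by ring
    rw [div_pow, div_le_iff₀ (pow_pos ha0_pos n)]
    have h7 : a 1 ^ n * a 0 ≤ (m * (∑ x ∈ A, μ x) * a 0) * a 0 ^ n :=
      (hQ n).trans (mul_le_mul_of_nonneg_right hfinal (pow_nonneg ha0_pos.le n))
    have h8 : a 1 ^ n * a 0 ≤ (m * (∑ x ∈ A, μ x) * a 0 ^ n) * a 0 := by
      calc a 1 ^ n * a 0 ≤ (m * (∑ x ∈ A, μ x) * a 0) * a 0 ^ n := h7
        _ = (m * (∑ x ∈ A, μ x) * a 0 ^ n) * a 0 := by ring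
    exact le_of_mul_le_mul_right h8 ha0_pos
end TFLB

/-- Inequality (4.2): `sup_{x,y} k_{2n}(x,y) ≥ λ(A)ⁿ/μ(A)` where
`λ(A) = sup { ‖Kf‖₂²/‖f‖₂² : supp f ⊆ A, f ≠ 0 }`. -/
theorem test_function_lower_bound
    {Γ : Type*} [Countable Γ]
    (μ : Γ → ℝ) (hμpos : ∀ x, 0 < μ x)
    (k : Γ → Γ → ℝ)
    (hk_symm : ∀ x y, k x y = k y x)
    (hk_nonneg : ∀ x y, 0 ≤ k x y)
    (hk_markov : ∀ x, ∑' y : Γ, k x y * μ y = 1)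
    (A : Finset Γ) (hA : A.Nonempty) (n : ℕ) :
    ENNReal.ofReal
        ((sSup {r : ℝ | ∃ f : Γ → ℝ, f ≠ 0 ∧ (∀ x ∉ A, f x = 0) ∧
            r = (∑' x : Γ, (∑' y : Γ, k x y * f y * μ y) ^ 2 * μ x) /
                (∑' x : Γ, f x ^ 2 * μ x)}) ^ n /
          (∑ x ∈ A, μ x)) ≤
      ⨆ x : Γ, ⨆ y : Γ, ENNReal.ofReal (iterKernel μ k (2 * n) x y) := by
  classical
  set S := {r : ℝ | ∃ f : Γ → ℝ, f ≠ 0 ∧ (∀ x ∉ A, f x = 0) ∧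
      r = (∑' x : Γ, (∑' y : Γ, k x y * f y * μ y) ^ 2 * μ x) /
          (∑' x : Γ, f x ^ 2 * μ x)} with hS
  have hSnonneg : ∀ r ∈ S, (0:ℝ) ≤ r := by
    rintro r ⟨f, hf0, hfA, rfl⟩
    exact div_nonneg (tsum_nonneg fun x => mul_nonneg (sq_nonneg _) (hμpos x).le)
      (tsum_nonneg fun x => mul_nonneg (sq_nonneg _) (hμpos x).le)
  have hμA_pos : (0:ℝ) < ∑ x ∈ A, μ x := Finset.sum_pos (fun i _ => hμpos i) hA
  rcases Nat.eq_zero_or_pos n with hn0 | hn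
  · subst hn0
    obtain ⟨x₀, hx₀⟩ := hA
    refine le_trans ?_ (le_iSup₂ (f := fun x y => ENNReal.ofReal (iterKernel μ k (2*0) x y)) x₀ x₀)
    have h1 : iterKernel μ k (2*0) x₀ x₀ = 1 / μ x₀ := by
      norm_num [iterKernel]
    rw [h1, pow_zero]
    refine ENNReal.ofReal_le_ofReal ?_
    have h2 : μ x₀ ≤ ∑ x ∈ A, μ x := Finset.single_le_sum (fun i _ => (hμpos i).le) hx₀
    calc 1 / (∑ x ∈ A, μ x) ≤ 1 / μ x₀ := by
          apply one_div_le_one_div_of_le (hμpos x₀) h2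
      _ = 1 / μ x₀ := rfl
  · have hn' : n ≠ 0 := hn.ne'
    have hnR : ((n:ℝ)) ≠ 0 := by exact_mod_cast hn'
    by_cases hM_top : (⨆ x : Γ, ⨆ y : Γ, ENNReal.ofReal (iterKernel μ k (2 * n) x y)) = ⊤
    · rw [hM_top]; exact le_top
    set M := ⨆ x : Γ, ⨆ y : Γ, ENNReal.ofReal (iterKernel μ k (2 * n) x y) with hM
    set m := M.toReal with hm
    have hm0 : 0 ≤ m := ENNReal.toReal_nonneg
    have hbound : ∀ x y, iterKernel μ k (2*n) x y ≤ m := by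
      intro x y
      have h1 : ENNReal.ofReal (iterKernel μ k (2*n) x y) ≤ M :=
        le_iSup₂ (f := fun x y => ENNReal.ofReal (iterKernel μ k (2*n) x y)) x y
      calc iterKernel μ k (2*n) x y
          = (ENNReal.ofReal (iterKernel μ k (2*n) x y)).toReal :=
            (ENNReal.toReal_ofReal (TFLB.iterKernel_nonneg hμpos hk_nonneg hk_markov _ x y)).symm
        _ ≤ M.toReal := ENNReal.toReal_mono hM_top h1
    have hkey : ∀ r ∈ S, r ^ n ≤ m * (∑ x ∈ A, μ x) := by
      rintro r ⟨f, hf0, hfA, rfl⟩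
      exact TFLB.key hμpos hk_symm hk_nonneg hk_markov A n hn' m hm0 hbound f hf0 hfA
    have hc0 : (0:ℝ) ≤ (m * (∑ x ∈ A, μ x)) ^ ((n:ℝ))⁻¹ :=
      Real.rpow_nonneg (mul_nonneg hm0 hμA_pos.le) _
    have hSle : ∀ r ∈ S, r ≤ (m * (∑ x ∈ A, μ x)) ^ ((n:ℝ))⁻¹ := by
      intro r hr
      have hr0 := hSnonneg r hr
      have h1 : (r ^ n) ^ ((n:ℝ))⁻¹ = r := by
        rw [← Real.rpow_natCast r n, ← Real.rpow_mul hr0, mul_inv_cancel₀ hnR, Real.rpow_one]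
      calc r = (r ^ n) ^ ((n:ℝ))⁻¹ := h1.symm
        _ ≤ (m * (∑ x ∈ A, μ x)) ^ ((n:ℝ))⁻¹ :=
            Real.rpow_le_rpow (pow_nonneg hr0 n) (hkey r hr) (by positivity)
    have hsSup_le : sSup S ≤ (m * (∑ x ∈ A, μ x)) ^ ((n:ℝ))⁻¹ := Real.sSup_le hSle hc0
    have hsSup0 : (0:ℝ) ≤ sSup S := Real.sSup_nonneg hSnonneg
    have hpow : (sSup S) ^ n ≤ m * (∑ x ∈ A, μ x) := by
      calc (sSup S) ^ n ≤ ((m * (∑ x ∈ A, μ x)) ^ ((n:ℝ))⁻¹) ^ n :=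
            pow_le_pow_left₀ hsSup0 hsSup_le n
        _ = m * (∑ x ∈ A, μ x) := by
            rw [← Real.rpow_natCast ((m * (∑ x ∈ A, μ x)) ^ ((n:ℝ))⁻¹) n,
              ← Real.rpow_mul (mul_nonneg hm0 hμA_pos.le), inv_mul_cancel₀ hnR, Real.rpow_one]
    calc ENNReal.ofReal ((sSup S) ^ n / (∑ x ∈ A, μ x))
        ≤ ENNReal.ofReal m := by
          refine ENNReal.ofReal_le_ofReal ?_
          rw [div_le_iff₀ hμA_pos]
          linarith [hpow]
      _ = M := ENNReal.ofReal_toReal hM_top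
end
end

section
/- Let K be a Markov operator symmetric with respect to μ on a countable weighted graph (Γ,μ), with kernel k₁, and suppose there is α > 0 such that k₁(x,x) μ(x) ≥ α for all x ∈ Γ. Then E_K(f,f) ≤ α^{-1} E_{K²}(f,f) for all f ∈ ℓ²(Γ,μ). -/
open scoped BigOperators
open Classical

noncomputable section

/-- The Dirichlet form `E_S(f,f) = ⟨(I - S)f, f⟩` in `ℓ²(Γ,μ)` of the Markov operator `S`
whose kernel with respect to `μ` is `s`. -/
def dirichletForm {Γ : Type*} (μ : Γ → ℝ) (s : Γ → Γ → ℝ) (f : Γ → ℝ) : ℝ :=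
  ∑' x : Γ, (f x - ∑' y : Γ, s x y * f y * μ y) * f x * μ x

lemma abs_mul_le_half_sq (a b : ℝ) : |a * b| ≤ (a ^ 2 + b ^ 2) / 2 := by
  rw [abs_mul]
  nlinarith [sq_nonneg (|a| - |b|), sq_abs a, sq_abs b, abs_nonneg a, abs_nonneg b]

lemma abs_le_half_sq_add_one (a : ℝ) : |a| ≤ (a ^ 2 + 1) / 2 := by
  nlinarith [sq_nonneg (|a| - 1), sq_abs a]

/-- Key estimates for a symmetric nonnegative kernel `s` with constant row sums `c`:
the off-diagonal quadratic form `Q_s(f) = ∑ₓ (∑_y s x y f y μ y) f x μ x` is well defined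
(inner and outer sums converge) and bounded by `c ∑ f² μ`. -/
lemma markov_form_bound {Γ : Type*} (μ : Γ → ℝ) (hμpos : ∀ x, 0 < μ x)
    (s : Γ → Γ → ℝ) (hs_symm : ∀ x y, s x y = s y x) (hs_nn : ∀ x y, 0 ≤ s x y)
    (c : ℝ) (hrowS : ∀ x, Summable fun y => s x y * μ y)
    (hrow : ∀ x, ∑' y, s x y * μ y = c)
    (f : Γ → ℝ) (hf : Summable fun x => f x ^ 2 * μ x) :
    (∀ x, Summable fun y => s x y * f y * μ y) ∧
      Summable (fun x => (∑' y, s x y * f y * μ y) * f x * μ x) ∧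
      ∑' x, (∑' y, s x y * f y * μ y) * f x * μ x ≤ c * ∑' x, f x ^ 2 * μ x := by
  set A := ∑' x, f x ^ 2 * μ x with hA
  set G : Γ × Γ → ℝ := fun p => s p.1 p.2 * f p.2 ^ 2 * μ p.2 * μ p.1 with hGdef
  set G' : Γ × Γ → ℝ := fun p => s p.1 p.2 * f p.1 ^ 2 * μ p.2 * μ p.1 with hG'def
  have hGnn : ∀ p, 0 ≤ G p := fun p =>
    mul_nonneg (mul_nonneg (mul_nonneg (hs_nn _ _) (sq_nonneg _)) (hμpos _).le) (hμpos _).le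
  have hG'nn : ∀ p, 0 ≤ G' p := fun p =>
    mul_nonneg (mul_nonneg (mul_nonneg (hs_nn _ _) (sq_nonneg _)) (hμpos _).le) (hμpos _).le
  -- swapped-G slices
  have hGswapRowEq : ∀ a, (fun b => G (b, a)) = fun b => (f a ^ 2 * μ a) * (s a b * μ b) := by
    intro a; funext b; simp only [hGdef]; rw [hs_symm]; ring
  have hGswapRowS : ∀ a, Summable fun b => G (b, a) := by
    intro a; rw [hGswapRowEq a]; exact (hrowS a).mul_left _
  have hGswapRow : ∀ a, ∑' b, G (b, a) = f a ^ 2 * μ a * c := by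
    intro a; rw [hGswapRowEq a, tsum_mul_left, hrow a]
  have hGswap : Summable (fun p : Γ × Γ => G (Prod.swap p)) := by
    rw [summable_prod_of_nonneg (fun p => hGnn _)]
    refine ⟨fun a => hGswapRowS a, ?_⟩
    have : (fun a => ∑' b, G (Prod.swap (a, b))) = fun a => f a ^ 2 * μ a * c := by
      funext a; simpa using hGswapRow a
    rw [this]
    exact (hf.mul_right c).congr (fun a => by ring)
  have hGs : Summable G := by
    have := hGswap.prod_symm
    simpa [Prod.swap_swap] using this
  have hGrows := (summable_prod_of_nonneg (fun p => hGnn p)).1 hGs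
  -- G' summable
  have hG'rowEq : ∀ x, (fun y => G' (x, y)) = fun y => (f x ^ 2 * μ x) * (s x y * μ y) := by
    intro x; funext y; simp only [hG'def]; ring
  have hG'rowS : ∀ x, Summable fun y => G' (x, y) := by
    intro x; rw [hG'rowEq x]; exact (hrowS x).mul_left _
  have hG'row : ∀ x, ∑' y, G' (x, y) = f x ^ 2 * μ x * c := by
    intro x; rw [hG'rowEq x, tsum_mul_left, hrow x]
  have hG's : Summable G' := by
    rw [summable_prod_of_nonneg (fun p => hG'nn _)]
    refine ⟨hG'rowS, ?_⟩
    have : (fun x => ∑' y, G' (x, y)) = fun x => f x ^ 2 * μ x * c := funext hG'row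
    rw [this]
    exact (hf.mul_right c).congr (fun a => by ring)
  -- row-level: Summable fun y => s x y * f y ^ 2 * μ y
  have hSf2 : ∀ x, Summable fun y => s x y * f y ^ 2 * μ y := by
    intro x
    have h1 := (hGrows.1 x).mul_right (μ x)⁻¹
    refine h1.congr (fun y => ?_)
    simp only [hGdef]
    field_simp [(hμpos x).ne']
  -- claim 1: inner summable
  have hinner : ∀ x, Summable fun y => s x y * f y * μ y := by
    intro x
    apply Summable.of_norm_bounded (g := fun y => (s x y * f y ^ 2 * μ y + s x y * μ y) / 2)
      (((hSf2 x).add (hrowS x)).div_const 2)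
    intro y
    have h0 : 0 ≤ s x y * μ y := mul_nonneg (hs_nn x y) (hμpos y).le
    have h1 := mul_le_mul_of_nonneg_left (abs_le_half_sq_add_one (f y)) h0
    have h2 : ‖s x y * f y * μ y‖ = s x y * μ y * |f y| := by
      rw [Real.norm_eq_abs, abs_mul, abs_mul, abs_of_nonneg (hs_nn x y),
        abs_of_nonneg (hμpos y).le]
      ring
    rw [h2]
    nlinarith [h1]
  -- H and its bound
  set H : Γ × Γ → ℝ := fun p => (s p.1 p.2 * f p.2 * μ p.2) * (f p.1 * μ p.1) with hHdef
  have hHbound : ∀ p, |H p| ≤ (G p + G' p) / 2 := by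
    intro p
    have hnn : 0 ≤ s p.1 p.2 * μ p.2 * μ p.1 :=
      mul_nonneg (mul_nonneg (hs_nn _ _) (hμpos _).le) (hμpos _).le
    have e : H p = (s p.1 p.2 * μ p.2 * μ p.1) * (f p.2 * f p.1) := by
      simp only [hHdef]; ring
    rw [e, abs_mul, abs_of_nonneg hnn]
    have h1 := mul_le_mul_of_nonneg_left (abs_mul_le_half_sq (f p.2) (f p.1)) hnn
    have e2 : s p.1 p.2 * μ p.2 * μ p.1 * ((f p.2 ^ 2 + f p.1 ^ 2) / 2) = (G p + G' p) / 2 := by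
      simp only [hGdef, hG'def]; ring
    linarith [h1, e2 ▸ h1]
  have hHalf : Summable (fun p => (G p + G' p) / 2) := (hGs.add hG's).div_const 2
  have hHs : Summable H := by
    apply Summable.of_norm_bounded hHalf
    intro p; simpa [Real.norm_eq_abs] using hHbound p
  have hHrows : ∀ x, Summable fun y => H (x, y) := fun x => hHs.prod_factor x
  -- outer function equality
  have houter : ∀ x, (∑' y, s x y * f y * μ y) * f x * μ x = ∑' y, H (x, y) := by
    intro x
    rw [mul_assoc, ← tsum_mul_right]
  -- half-row sums
  have hHalfRowS : ∀ x, Summable fun y => (G (x, y) + G' (x, y)) / 2 :=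
    fun x => ((hGrows.1 x).add (hG'rowS x)).div_const 2
  have hHalfRow : ∀ x, ∑' y, (G (x, y) + G' (x, y)) / 2
      = ((∑' y, G (x, y)) + ∑' y, G' (x, y)) / 2 := by
    intro x
    rw [tsum_div_const, Summable.tsum_add (hGrows.1 x) (hG'rowS x)]
  -- outer summable
  have houterS : Summable (fun x => (∑' y, s x y * f y * μ y) * f x * μ x) := by
    apply Summable.of_norm_bounded
      (g := fun x => ((∑' y, G (x, y)) + ∑' y, G' (x, y)) / 2)
      (((hGrows.2).add ((summable_prod_of_nonneg (fun p => hG'nn p)).1 hG's).2).div_const 2)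
    intro x
    rw [houter x, ← hHalfRow x]
    calc ‖∑' y, H (x, y)‖ ≤ ∑' y, ‖H (x, y)‖ := norm_tsum_le_tsum_norm ((hHrows x).abs.congr
          (fun y => (Real.norm_eq_abs _).symm))
      _ ≤ ∑' y, (G (x, y) + G' (x, y)) / 2 := by
          apply Summable.tsum_le_tsum _ ((hHrows x).abs.congr (fun y => (Real.norm_eq_abs _).symm))
            (hHalfRowS x)
          intro y
          simpa [Real.norm_eq_abs] using hHbound (x, y)
  -- total sums of G and G'
  have hG'total : ∑' p, G' p = A * c := by
    rw [Summable.tsum_prod' hG's hG'rowS]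
    have : (fun x => ∑' y, G' (x, y)) = fun x => (f x ^ 2 * μ x) * c := funext hG'row
    calc ∑' x, ∑' y, G' (x, y) = ∑' x, (f x ^ 2 * μ x) * c := by rw [this]
      _ = A * c := by rw [tsum_mul_right]
  have hGtotal : ∑' p, G p = A * c := by
    have e1 : ∑' p : Γ × Γ, G (Prod.swap p) = ∑' p, G p := by
      have := (Equiv.prodComm Γ Γ).tsum_eq G
      simpa [Equiv.prodComm] using this
    rw [← e1, Summable.tsum_prod' hGswap (fun a => by simpa using hGswapRowS a)]
    have : (fun a => ∑' b, G (Prod.swap (a, b))) = fun a => (f a ^ 2 * μ a) * c := by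
      funext a; simpa using hGswapRow a
    calc ∑' (a) (b), G (Prod.swap (a, b)) = ∑' a, (f a ^ 2 * μ a) * c := by rw [this]
      _ = A * c := by rw [tsum_mul_right]
  -- the bound
  refine ⟨hinner, houterS, ?_⟩
  have e3 : ∑' x, (∑' y, s x y * f y * μ y) * f x * μ x = ∑' p, H p := by
    rw [Summable.tsum_prod' hHs hHrows]
    exact tsum_congr houter
  rw [e3]
  have h4 : ∑' p, H p ≤ ∑' p, (G p + G' p) / 2 := by
    apply Summable.tsum_le_tsum _ hHs hHalf
    intro p
    exact le_trans (le_abs_self _) (hHbound p)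
  have h5 : ∑' p, (G p + G' p) / 2 = (A * c + A * c) / 2 := by
    rw [tsum_div_const, Summable.tsum_add hGs hG's, hGtotal, hG'total]
  rw [h5] at h4
  linarith

/-- If `k₁(x,x) μ(x) ≥ α > 0` for all `x`, then `E_K(f,f) ≤ α⁻¹ E_{K²}(f,f)`. -/
theorem dirichlet_K_le_dirichlet_K_sq
    {Γ : Type*} [Countable Γ]
    (μ : Γ → ℝ) (hμpos : ∀ x, 0 < μ x)
    (k : Γ → Γ → ℝ)
    (hk_symm : ∀ x y, k x y = k y x)
    (hk_nonneg : ∀ x y, 0 ≤ k x y)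
    (hk_markov : ∀ x, ∑' y : Γ, k x y * μ y = 1)
    (α : ℝ) (hα : 0 < α) (hdiag : ∀ x, α ≤ k x x * μ x) :
    ∀ f : Γ → ℝ, Summable (fun x : Γ => f x ^ 2 * μ x) →
      dirichletForm μ k f ≤
        α⁻¹ * dirichletForm μ (fun x y => ∑' z : Γ, k x z * k z y * μ z) f := by
  intro f hf
  set k2 : Γ → Γ → ℝ := fun x y => ∑' z : Γ, k x z * k z y * μ z with hk2def
  -- basic summability of rows of k
  have h1 : ∀ x, Summable fun y => k x y * μ y := by
    intro x
    by_contra h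
    have h0 := tsum_eq_zero_of_not_summable h
    rw [hk_markov x] at h0
    exact one_ne_zero h0
  -- the product family P x
  have hPnn : ∀ x, ∀ p : Γ × Γ, 0 ≤ (k x p.1 * k p.1 p.2 * μ p.1) * μ p.2 := fun x p =>
    mul_nonneg (mul_nonneg (mul_nonneg (hk_nonneg _ _) (hk_nonneg _ _)) (hμpos _).le)
      (hμpos _).le
  have hProwEq : ∀ x z, (fun y => (k x z * k z y * μ z) * μ y)
      = fun y => (k x z * μ z) * (k z y * μ y) := by
    intro x z; funext y; ring
  have hP : ∀ x, Summable (fun p : Γ × Γ => (k x p.1 * k p.1 p.2 * μ p.1) * μ p.2) := by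
    intro x
    rw [summable_prod_of_nonneg (hPnn x)]
    constructor
    · intro z
      rw [hProwEq x z]
      exact (h1 z).mul_left _
    · have : (fun z => ∑' y, (k x z * k z y * μ z) * μ y) = fun z => k x z * μ z := by
        funext z
        rw [hProwEq x z, tsum_mul_left, hk_markov z, mul_one]
      rw [this]
      exact h1 x
  have hPtotal : ∀ x, ∑' p : Γ × Γ, (k x p.1 * k p.1 p.2 * μ p.1) * μ p.2 = 1 := by
    intro x
    rw [Summable.tsum_prod' (hP x) (fun z => by rw [hProwEq x z]; exact (h1 z).mul_left _)]
    have : (fun z => ∑' y, (k x z * k z y * μ z) * μ y) = fun z => k x z * μ z := by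
      funext z
      rw [hProwEq x z, tsum_mul_left, hk_markov z, mul_one]
    calc ∑' (z) (y), (k x z * k z y * μ z) * μ y = ∑' z, k x z * μ z := by rw [this]
      _ = 1 := hk_markov x
  -- swapped version: slices over z for fixed y
  have hPswap : ∀ x, Summable (fun q : Γ × Γ => (k x q.2 * k q.2 q.1 * μ q.2) * μ q.1) := by
    intro x
    have := (hP x).prod_symm
    exact this.congr (fun q => rfl)
  have hzS' : ∀ x y, Summable fun z => (k x z * k z y * μ z) * μ y :=
    fun x y => (hPswap x).prod_factor y
  have hzS : ∀ x y, Summable fun z => k x z * k z y * μ z := by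
    intro x y
    have := (hzS' x y).mul_right (μ y)⁻¹
    exact this.congr (fun z => by field_simp [(hμpos y).ne'])
  have hk2rowval : ∀ x y, ∑' z, (k x z * k z y * μ z) * μ y = k2 x y * μ y := by
    intro x y
    rw [tsum_mul_right]
  have hk2rowS : ∀ x, Summable fun y => k2 x y * μ y := by
    intro x
    have h2 := ((summable_prod_of_nonneg (fun q => hPnn x q.swap)).1 (hPswap x)).2
    exact h2.congr (fun y => hk2rowval x y)
  have hk2row : ∀ x, ∑' y, k2 x y * μ y = 1 := by
    intro x
    have e1 : ∑' q : Γ × Γ, (k x q.2 * k q.2 q.1 * μ q.2) * μ q.1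
        = ∑' p : Γ × Γ, (k x p.1 * k p.1 p.2 * μ p.1) * μ p.2 := by
      have := (Equiv.prodComm Γ Γ).tsum_eq
        (fun p : Γ × Γ => (k x p.1 * k p.1 p.2 * μ p.1) * μ p.2)
      simpa [Equiv.prodComm] using this
    have e2 : ∑' q : Γ × Γ, (k x q.2 * k q.2 q.1 * μ q.2) * μ q.1
        = ∑' (y) (z), (k x z * k z y * μ z) * μ y :=
      Summable.tsum_prod' (hPswap x) (fun y => hzS' x y)
    have : ∑' (y) (z), (k x z * k z y * μ z) * μ y = ∑' y, k2 x y * μ y :=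
      tsum_congr (fun y => hk2rowval x y)
    rw [← this, ← e2, e1, hPtotal x]
  -- symmetry, nonnegativity, lower bound of k2
  have hk2_symm : ∀ x y, k2 x y = k2 y x := by
    intro x y
    apply tsum_congr
    intro z
    rw [hk_symm x z, hk_symm z y]
    ring
  have hk2_nn : ∀ x y, 0 ≤ k2 x y := fun x y =>
    tsum_nonneg fun z => mul_nonneg (mul_nonneg (hk_nonneg _ _) (hk_nonneg _ _)) (hμpos _).le
  have hk2_ge : ∀ x y, α * k x y ≤ k2 x y := by
    intro x y
    have h3 : k x y * k y y * μ y ≤ k2 x y :=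
      Summable.le_tsum (hzS x y) y fun z _ =>
        mul_nonneg (mul_nonneg (hk_nonneg _ _) (hk_nonneg _ _)) (hμpos _).le
    have h4 : α * k x y ≤ k x y * (k y y * μ y) :=
      calc α * k x y = k x y * α := by ring
        _ ≤ k x y * (k y y * μ y) := mul_le_mul_of_nonneg_left (hdiag y) (hk_nonneg x y)
    calc α * k x y ≤ k x y * (k y y * μ y) := h4
      _ = k x y * k y y * μ y := by ring
      _ ≤ k2 x y := h3
  -- the kernel s = k2 - α k
  set s : Γ → Γ → ℝ := fun x y => k2 x y - α * k x y with hsdef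
  have hs_symm : ∀ x y, s x y = s y x := by
    intro x y; simp only [hsdef]; rw [hk2_symm x y, hk_symm x y]
  have hs_nn : ∀ x y, 0 ≤ s x y := fun x y => sub_nonneg.2 (hk2_ge x y)
  have hsrowS : ∀ x, Summable fun y => s x y * μ y := by
    intro x
    have := (hk2rowS x).sub ((h1 x).mul_left α)
    exact this.congr (fun y => by simp only [hsdef]; ring)
  have hsrow : ∀ x, ∑' y, s x y * μ y = 1 - α := by
    intro x
    have e : (fun y => s x y * μ y) = fun y => k2 x y * μ y - α * (k x y * μ y) := by
      funext y; simp only [hsdef]; ring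
    rw [e, Summable.tsum_sub (hk2rowS x) ((h1 x).mul_left α), tsum_mul_left, hk2row x, hk_markov x,
      mul_one]
  -- apply the key lemma to the three kernels
  obtain ⟨I1, O1, -⟩ := markov_form_bound μ hμpos k hk_symm hk_nonneg 1 h1 hk_markov f hf
  obtain ⟨I2, O2, -⟩ := markov_form_bound μ hμpos k2 hk2_symm hk2_nn 1 hk2rowS hk2row f hf
  obtain ⟨Is, Os, Qs⟩ := markov_form_bound μ hμpos s hs_symm hs_nn (1 - α) hsrowS hsrow f hf
  set A := ∑' x, f x ^ 2 * μ x with hA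
  set Q1 := ∑' x, (∑' y, k x y * f y * μ y) * f x * μ x with hQ1
  set Q2 := ∑' x, (∑' y, k2 x y * f y * μ y) * f x * μ x with hQ2
  -- inner sums of s
  have hinner_eq : ∀ x, (∑' y, s x y * f y * μ y)
      = (∑' y, k2 x y * f y * μ y) - α * ∑' y, k x y * f y * μ y := by
    intro x
    have e : (fun y => s x y * f y * μ y)
        = fun y => k2 x y * f y * μ y - α * (k x y * f y * μ y) := by
      funext y; simp only [hsdef]; ring
    rw [e, Summable.tsum_sub (I2 x) ((I1 x).mul_left α), tsum_mul_left]
  -- Q_s = Q2 - α Q1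
  have hQseq : ∑' x, (∑' y, s x y * f y * μ y) * f x * μ x = Q2 - α * Q1 := by
    have e : (fun x => (∑' y, s x y * f y * μ y) * f x * μ x)
        = fun x => (∑' y, k2 x y * f y * μ y) * f x * μ x
            - α * ((∑' y, k x y * f y * μ y) * f x * μ x) := by
      funext x; rw [hinner_eq x]; ring
    rw [e, Summable.tsum_sub O2 (O1.mul_left α), tsum_mul_left]
  have hQs : Q2 - α * Q1 ≤ (1 - α) * A := by rw [← hQseq]; exact Qs
  -- Dirichlet forms as A - Q
  have hE1 : dirichletForm μ k f = A - Q1 := by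
    unfold dirichletForm
    have e : (fun x => (f x - ∑' y, k x y * f y * μ y) * f x * μ x)
        = fun x => f x ^ 2 * μ x - (∑' y, k x y * f y * μ y) * f x * μ x := by
      funext x; ring
    rw [e, Summable.tsum_sub hf O1]
  have hE2 : dirichletForm μ k2 f = A - Q2 := by
    unfold dirichletForm
    have e : (fun x => (f x - ∑' y, k2 x y * f y * μ y) * f x * μ x)
        = fun x => f x ^ 2 * μ x - (∑' y, k2 x y * f y * μ y) * f x * μ x := by
      funext x; ring
    rw [e, Summable.tsum_sub hf O2]
  rw [hE1]
  show A - Q1 ≤ α⁻¹ * dirichletForm μ k2 f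
  rw [hE2]
  have hkey : α * (A - Q1) ≤ A - Q2 := by nlinarith [hQs]
  calc A - Q1 = α⁻¹ * (α * (A - Q1)) := by field_simp
    _ ≤ α⁻¹ * (A - Q2) := mul_le_mul_of_nonneg_left hkey (inv_nonneg.2 hα.le)
end
end
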